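/- The induced substitution matrix M⁽²⁾ = [[0,0,1],[1,1,0],[1,1,0]] on the legal length-2 words (LL, LS, SL) of the Fibonacci substitution has a unique eigenvalue of maximal modulus, equal to φ = (1+√5)/2, and its eigenvector normalized to sum 1 equals (√5−2, (3−√5)/2, (3−√5)/2). Hence the asymptotic frequencies of the length-2 factors LL, LS, SL in the Fibonacci word are √5−2, (3−√5)/2, (3−√5)/2 respectively. -/

import Mathlib

open Matrix

lemma fib_det_aux {R : Type*} [CommRing R] (z : R) :
    ((z • (1 : Matrix (Fin 3) (Fin 3) R)) - !![0,0,1;1,1,0;1,1,0]).det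
      = z^3 - z^2 - z := by
  have h : (z • (1 : Matrix (Fin 3) (Fin 3) R)) - !![0,0,1;1,1,0;1,1,0]
      = !![z,0,-1;-1,z-1,0;-1,-1,z] := by
    ext i j
    fin_cases i <;> fin_cases j <;>
      simp [Matrix.one_apply, Matrix.vecHead, Matrix.vecTail]
  rw [h, Matrix.det_fin_three]
  simp [Matrix.vecHead, Matrix.vecTail]
  ring

/-- The induced substitution matrix M⁽²⁾ = [[0,0,1],[1,1,0],[1,1,0]]
on the legal length-2 words (LL, LS, SL) has a unique eigenvalue of maximal
modulus, namely φ = (1+√5)/2, and its eigenvector normalized to sum 1 is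
(√5−2, (3−√5)/2, (3−√5)/2): the asymptotic frequencies of LL, LS, SL. -/
theorem fib_induced_matrix_perron_frobenius :
    let φ : ℝ := (1 + Real.sqrt 5) / 2
    let M : Matrix (Fin 3) (Fin 3) ℝ := !![0, 0, 1; 1, 1, 0; 1, 1, 0]
    let Mc : Matrix (Fin 3) (Fin 3) ℂ := !![0, 0, 1; 1, 1, 0; 1, 1, 0]
    let v : Fin 3 → ℝ := ![Real.sqrt 5 - 2, (3 - Real.sqrt 5) / 2, (3 - Real.sqrt 5) / 2]
    (φ ∈ spectrum ℝ M) ∧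
    (∀ μ ∈ spectrum ℂ Mc, μ ≠ (φ : ℂ) → ‖μ‖ < φ) ∧
    (M.mulVec v = φ • v) ∧
    (v 0 + v 1 + v 2 = 1) := by
  intro φ M Mc v
  have hs : Real.sqrt 5 ^ 2 = 5 := Real.sq_sqrt (by norm_num)
  have hs2 : (2:ℝ) < Real.sqrt 5 := by nlinarith [Real.sqrt_nonneg 5]
  refine ⟨?_, ?_, ?_, ?_⟩
  · rw [spectrum.mem_iff, Matrix.isUnit_iff_isUnit_det, isUnit_iff_ne_zero, not_not,
      Algebra.algebraMap_eq_smul_one, fib_det_aux]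
    show φ ^ 3 - φ ^ 2 - φ = 0
    simp only [φ]
    linear_combination ((3 + Real.sqrt 5)/8 - 1/4) * hs
  · intro μ hμ hne
    rw [spectrum.mem_iff, Matrix.isUnit_iff_isUnit_det, isUnit_iff_ne_zero, not_not,
      Algebra.algebraMap_eq_smul_one, fib_det_aux] at hμ
    have hsC : (Real.sqrt 5 : ℂ) ^ 2 = 5 := by exact_mod_cast (by exact_mod_cast hs : ((Real.sqrt 5 ^ 2 : ℝ) : ℂ) = 5)
    have hfac : μ * ((μ - (φ:ℂ)) * (μ - (((1 - Real.sqrt 5)/2 : ℝ) : ℂ))) = 0 := by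
      simp only [φ]
      push_cast
      linear_combination hμ - μ/4 * hsC
    have hφpos : (0:ℝ) < φ := by simp only [φ]; nlinarith
    rcases mul_eq_zero.mp hfac with h0 | h1
    · simp [h0, hφpos]
    · rcases mul_eq_zero.mp h1 with h2 | h3
      · exact absurd (by linear_combination h2) hne
      · have hμval : μ = (((1 - Real.sqrt 5)/2 : ℝ) : ℂ) := by linear_combination h3
        rw [hμval, Complex.norm_real, Real.norm_eq_abs, abs_of_neg (by nlinarith)]
        simp only [φ]
        nlinarith
  · funext i
    fin_cases i <;>
      simp [Matrix.mulVec, dotProduct, Fin.sum_univ_three, Matrix.vecHead,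
        Matrix.vecTail, M, v, φ] <;>
      nlinarith [hs]
  · simp [v]; ring
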